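/- Let X and M̃ be SPD n×n matrices with c₁ vᵀXv ≤ vᵀM̃v ≤ c₂ vᵀXv for all v, where 0 < c₁ ≤ c₂. Let P have full column rank and let π_X = P(PᵀXP)⁻¹PᵀX and π_{M̃} = P(PᵀM̃P)⁻¹PᵀM̃ be the corresponding orthogonal projections onto range(P). Then for all v: ‖(I − π_X)v‖_X² ≤ (1/c₁)‖(I − π_{M̃})v‖_{M̃}² and ‖(I − π_{M̃})v‖_{M̃}² ≤ c₂‖(I − π_X)v‖_X². -/

import Mathlib

open Matrix

/-- The `A`-norm of a vector, `‖v‖_A = √(vᵀ A v)`. -/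
noncomputable def anorm {n : ℕ} (A : Matrix (Fin n) (Fin n) ℝ) (v : Fin n → ℝ) : ℝ :=
  Real.sqrt (v ⬝ᵥ A.mulVec v)

/-- The operator norm of a matrix `E` induced by the `A`-norm. -/
noncomputable def opNormA {n : ℕ} (A E : Matrix (Fin n) (Fin n) ℝ) : ℝ :=
  ⨆ v : {v : Fin n → ℝ // v ≠ 0}, anorm A (E.mulVec v) / anorm A v

section Aux
variable {n nc : ℕ}

lemma posdef_PtAP (A : Matrix (Fin n) (Fin n) ℝ) (hA : A.PosDef)
    (P : Matrix (Fin n) (Fin nc) ℝ) (hP : Function.Injective P.mulVec) :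
    (Pᵀ * A * P).PosDef := by
  have h := hA.posSemidef.conjTranspose_mul_mul_same P
  rw [conjTranspose_eq_transpose_of_trivial] at h
  refine PosDef.of_dotProduct_mulVec_pos h.isHermitian (fun x hx => ?_)
  have hPx : P.mulVec x ≠ 0 := by
    intro h0
    exact hx (hP (by simpa [mulVec_zero] using h0))
  have := hA.dotProduct_mulVec_pos hPx
  simpa [star_mulVec, dotProduct_mulVec, ← vecMul_vecMul, vecMul_transpose,
    Matrix.mul_assoc] using this

/-- Pᵀ A (1 - π) = 0 -/
lemma key_orth (A : Matrix (Fin n) (Fin n) ℝ) (hA : A.PosDef)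
    (P : Matrix (Fin n) (Fin nc) ℝ) (hP : Function.Injective P.mulVec) :
    Pᵀ * A * (1 - P * (Pᵀ * A * P)⁻¹ * Pᵀ * A) = 0 := by
  have hU : IsUnit (Pᵀ * A * P).det := isUnit_iff_ne_zero.mpr (posdef_PtAP A hA P hP).det_pos.ne'
  rw [Matrix.mul_sub, Matrix.mul_one]
  have : Pᵀ * A * (P * (Pᵀ * A * P)⁻¹ * Pᵀ * A)
      = (Pᵀ * A * P) * (Pᵀ * A * P)⁻¹ * (Pᵀ * A) := by
    simp only [Matrix.mul_assoc]
  rw [this, Matrix.mul_nonsing_inv _ hU, Matrix.one_mul, sub_self]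

/-- minimality of A-orthogonal projection error -/
lemma proj_min (A : Matrix (Fin n) (Fin n) ℝ) (hA : A.PosDef)
    (P : Matrix (Fin n) (Fin nc) ℝ) (hP : Function.Injective P.mulVec)
    (v : Fin n → ℝ) (w : Fin nc → ℝ) :
    ((1 - P * (Pᵀ * A * P)⁻¹ * Pᵀ * A).mulVec v) ⬝ᵥ
        A.mulVec ((1 - P * (Pᵀ * A * P)⁻¹ * Pᵀ * A).mulVec v)
      ≤ (v - P.mulVec w) ⬝ᵥ A.mulVec (v - P.mulVec w) := by
  set π := P * (Pᵀ * A * P)⁻¹ * Pᵀ * A with hπ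
  set e := (1 - π).mulVec v with he
  set u := ((Pᵀ * A * P)⁻¹ * Pᵀ * A).mulVec v - w with hu
  have hdecomp : v - P.mulVec w = e + P.mulVec u := by
    simp only [he, hu, hπ, sub_mulVec, one_mulVec, mulVec_sub, mulVec_mulVec]
    simp only [Matrix.mul_assoc]
    abel
  -- cross terms vanish
  have horth : Pᵀ.mulVec (A.mulVec e) = 0 := by
    have := key_orth A hA P hP
    calc Pᵀ.mulVec (A.mulVec e) = (Pᵀ * A * (1 - π)).mulVec v := by
          simp [he, mulVec_mulVec, Matrix.mul_assoc]
      _ = 0 := by rw [this]; simp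
  have hcross : e ⬝ᵥ A.mulVec (P.mulVec u) = 0 := by
    have hsym : Aᵀ = A := by simpa using hA.isHermitian.eq
    calc e ⬝ᵥ A.mulVec (P.mulVec u) = e ⬝ᵥ (A * P).mulVec u := by rw [mulVec_mulVec]
      _ = ((A * P)ᵀ.mulVec e) ⬝ᵥ u := by
            rw [dotProduct_mulVec, ← mulVec_transpose]
      _ = 0 := by
            rw [transpose_mul, ← mulVec_mulVec, hsym, horth]
            simp
  have hcross' : (P.mulVec u) ⬝ᵥ A.mulVec e = 0 := by
    have hsym : Aᵀ = A := by simpa using hA.isHermitian.eq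
    calc (P.mulVec u) ⬝ᵥ A.mulVec e = (A.mulVec (P.mulVec u)) ⬝ᵥ e := by
          rw [dotProduct_mulVec, ← mulVec_transpose, hsym]
      _ = e ⬝ᵥ A.mulVec (P.mulVec u) := dotProduct_comm _ _
      _ = 0 := hcross
  have hnn : 0 ≤ (P.mulVec u) ⬝ᵥ A.mulVec (P.mulVec u) := by
    simpa using hA.posSemidef.dotProduct_mulVec_nonneg (P.mulVec u)
  rw [hdecomp]
  simp only [add_dotProduct, dotProduct_add, mulVec_add, hcross, hcross']
  linarith

/-- the projection error in the other projection's image form -/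
lemma err_eq (A : Matrix (Fin n) (Fin n) ℝ)
    (P : Matrix (Fin n) (Fin nc) ℝ) (v : Fin n → ℝ) :
    (1 - P * (Pᵀ * A * P)⁻¹ * Pᵀ * A).mulVec v
      = v - P.mulVec (((Pᵀ * A * P)⁻¹ * Pᵀ * A).mulVec v) := by
  simp only [sub_mulVec, one_mulVec, mulVec_mulVec, Matrix.mul_assoc]

end Aux

theorem projection_spectral_equivalence {n nc : ℕ}
    (X Mt : Matrix (Fin n) (Fin n) ℝ) (hX : X.PosDef) (hMt : Mt.PosDef)
    (c₁ c₂ : ℝ) (hc₁ : 0 < c₁) (hc₁₂ : c₁ ≤ c₂)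
    (hequiv : ∀ v : Fin n → ℝ,
      c₁ * (v ⬝ᵥ X.mulVec v) ≤ v ⬝ᵥ Mt.mulVec v ∧
        v ⬝ᵥ Mt.mulVec v ≤ c₂ * (v ⬝ᵥ X.mulVec v))
    (P : Matrix (Fin n) (Fin nc) ℝ) (hP : Function.Injective P.mulVec)
    (piX piM : Matrix (Fin n) (Fin n) ℝ)
    (hpiX : piX = P * (Pᵀ * X * P)⁻¹ * Pᵀ * X)
    (hpiM : piM = P * (Pᵀ * Mt * P)⁻¹ * Pᵀ * Mt) :
    ∀ v : Fin n → ℝ,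
      ((1 - piX).mulVec v) ⬝ᵥ X.mulVec ((1 - piX).mulVec v)
          ≤ (1 / c₁) * (((1 - piM).mulVec v) ⬝ᵥ Mt.mulVec ((1 - piM).mulVec v)) ∧
      ((1 - piM).mulVec v) ⬝ᵥ Mt.mulVec ((1 - piM).mulVec v)
          ≤ c₂ * (((1 - piX).mulVec v) ⬝ᵥ X.mulVec ((1 - piX).mulVec v)) := by
  intro v
  subst hpiX hpiM
  set eX := (1 - P * (Pᵀ * X * P)⁻¹ * Pᵀ * X).mulVec v with heX
  set eM := (1 - P * (Pᵀ * Mt * P)⁻¹ * Pᵀ * Mt).mulVec v with heM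
  constructor
  · have h1 : eX ⬝ᵥ X.mulVec eX ≤ eM ⬝ᵥ X.mulVec eM := by
      have := proj_min X hX P hP v (((Pᵀ * Mt * P)⁻¹ * Pᵀ * Mt).mulVec v)
      rwa [← err_eq Mt P v, ← heM, ← heX] at this
    have h2 := (hequiv eM).1
    rw [one_div, le_inv_mul_iff₀ hc₁]
    nlinarith
  · have h1 : eM ⬝ᵥ Mt.mulVec eM ≤ eX ⬝ᵥ Mt.mulVec eX := by
      have := proj_min Mt hMt P hP v (((Pᵀ * X * P)⁻¹ * Pᵀ * X).mulVec v)
      rwa [← err_eq X P v, ← heX, ← heM] at this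
    have h2 := (hequiv eX).2
    linarith
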